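/- Let W_1,…,W_n be the weighted left creation operators associated to a positive regular free holomorphic function f = Σ_{|α|≥1} a_α X_α. Then I − Σ_{|β|≥1} a_β W_β W_β* = P_ℂ, the orthogonal projection of F²(H_n) onto the span of the vacuum vector 1, where the series converges in the strong operator topology. In particular Σ_{|α|≥1} a_α W_α W_α* ≤ I. -/

import Mathlib

open Filter Topology
open scoped ComplexConjugate ENNReal

namespace NCDomain

/-- Words in the free monoid `F_n^+` on `n` generators. -/
abbrev Word (n : ℕ) := FreeMonoid (Fin n)

instance {n : ℕ} : DecidableEq (Word n) :=
  inferInstanceAs (DecidableEq (List (Fin n)))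

/-- The length `|α|` of a word. -/
def wordLen {n : ℕ} (α : Word n) : ℕ := FreeMonoid.length α

/-- The coefficients `b_α`, defined by `b_{g_0} = 1` and, for `|α| ≥ 1`,
`b_α = Σ_{j=1}^{|α|} Σ_{γ_1⋯γ_j = α, |γ_i| ≥ 1} a_{γ_1}⋯a_{γ_j}`, the sum running over
all ordered factorizations of `α` into nonempty words. -/
noncomputable def bCoeff {n : ℕ} (a : Word n → ℝ) (α : Word n) : ℝ :=
  if α = 1 then 1
  else ∑' L : {L : List (Word n) // L.prod = α ∧ ∀ w ∈ L, w ≠ 1}, (L.1.map a).prod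

/-- `f = Σ_{|α|≥1} a_α X_α` is a positive regular free holomorphic function:
`a_{g_0} = 0`, `a_α ≥ 0`, `a_{g_i} > 0`, and
`limsup_{k→∞} (Σ_{|α|=k} |a_α|²)^{1/(2k)} < ∞`. -/
def PosRegular {n : ℕ} (a : Word n → ℝ) : Prop :=
  a 1 = 0 ∧ (∀ α, 0 ≤ a α) ∧ (∀ i : Fin n, 0 < a (FreeMonoid.of i)) ∧
    ∃ C : ℝ, ∀ᶠ k in atTop,
      (∑' α : {β : Word n // wordLen β = k}, (a α.1) ^ 2) ≤ C ^ (2 * k)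

/-- For a tuple `T` of operators and a word `α = g_{i_1}⋯g_{i_k}`,
the product `T_α = T_{i_1}⋯T_{i_k}` (and `T_{g_0} = I`). -/
noncomputable def opWord {n : ℕ} {H : Type*} [NormedAddCommGroup H] [NormedSpace ℂ H]
    (T : Fin n → H →L[ℂ] H) (α : Word n) : H →L[ℂ] H :=
  ((FreeMonoid.toList α).map T).prod

/-- The full Fock space `F²(H_n)`, realized as `ℓ²` over the free monoid. -/
abbrev Fock (n : ℕ) : Type := lp (fun _ : Word n => ℂ) 2

/-- The canonical orthonormal basis vector `e_α` of the Fock space. -/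
noncomputable def fockBasis {n : ℕ} (α : Word n) : Fock n := lp.single 2 α (1 : ℂ)

/-- `W` is the tuple of weighted left creation operators associated with `f = Σ a_α X_α`:
`W_i e_α = √(b_α / b_{g_i α}) e_{g_i α}`. -/
def IsWeightedShift {n : ℕ} (a : Word n → ℝ) (W : Fin n → Fock n →L[ℂ] Fock n) : Prop :=
  ∀ (i : Fin n) (α : Word n),
    W i (fockBasis α) =
      (Real.sqrt (bCoeff a α / bCoeff a (FreeMonoid.of i * α)) : ℂ) •
        fockBasis (FreeMonoid.of i * α)

/-! ### Auxiliary combinatorial material -/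

variable {n : ℕ}

/-- The type of factorizations of `α` into nonempty words. -/
abbrev Fact (n : ℕ) (α : Word n) : Type :=
  {L : List (Word n) // L.prod = α ∧ ∀ w ∈ L, w ≠ 1}

lemma toList_inj' : Function.Injective (FreeMonoid.toList : Word n → List (Fin n)) :=
  fun x y h => by rw [← FreeMonoid.ofList_toList x, h, FreeMonoid.ofList_toList]

lemma flatten_inj : ∀ (M₁ M₂ : List (List (Fin n))), M₁.flatten = M₂.flatten →
    M₁.map List.length = M₂.map List.length → M₁ = M₂
  | [], [], _, _ => rfl
  | [], _ :: _, _, hl => by simp at hl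
  | _ :: _, [], _, hl => by simp at hl
  | a :: M₁, b :: M₂, hf, hl => by
    simp only [List.flatten_cons, List.map_cons, List.cons.injEq] at hf hl ⊢
    obtain ⟨h1, h2⟩ := List.append_inj hf hl.1
    exact ⟨h1, flatten_inj M₁ M₂ h2 hl.2⟩

lemma word_length_eq (w : Word n) : FreeMonoid.length w = (FreeMonoid.toList w).length := rfl

lemma prod_toList_flatten (L : List (Word n)) :
    FreeMonoid.toList L.prod = (L.map FreeMonoid.toList).flatten :=
  FreeMonoid.toList_prod L

/-- The composition of `wordLen α` associated to a factorization of `α`. -/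
def factComp (α : Word n) (L : Fact n α) : Composition (wordLen α) where
  blocks := (L.1.map FreeMonoid.toList).map List.length
  blocks_pos := by
    intro i hi
    simp only [List.map_map, List.mem_map, Function.comp_apply] at hi
    obtain ⟨w, hw, rfl⟩ := hi
    have := L.2.2 w hw
    have : FreeMonoid.toList w ≠ [] := by
      intro h
      exact this (toList_inj' (by simp [h]))
    exact List.length_pos_iff.2 this
  blocks_sum := by
    rw [← List.length_flatten, ← prod_toList_flatten, L.2.1, wordLen, word_length_eq]

lemma factComp_inj (α : Word n) : Function.Injective (factComp α) := by
  intro L₁ L₂ h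
  have hb : (L₁.1.map FreeMonoid.toList).map List.length
      = (L₂.1.map FreeMonoid.toList).map List.length := congrArg Composition.blocks h
  have hf : (L₁.1.map FreeMonoid.toList).flatten = (L₂.1.map FreeMonoid.toList).flatten := by
    rw [← prod_toList_flatten, ← prod_toList_flatten, L₁.2.1, L₂.2.1]
  have := flatten_inj _ _ hf hb
  exact Subtype.ext (List.map_injective_iff.2 toList_inj' this)

instance factFinite (α : Word n) : Finite (Fact n α) :=
  Finite.of_injective _ (factComp_inj α)

lemma fact_one_eq (L : Fact n (1 : Word n)) : L.1 = [] := by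
  obtain ⟨L, hp, hne⟩ := L
  cases L with
  | nil => rfl
  | cons w t =>
    exfalso
    have : FreeMonoid.toList ((w :: t) : List (Word n)).prod = [] := by rw [hp]; rfl
    rw [prod_toList_flatten] at this
    simp only [List.map_cons, List.flatten_cons, List.append_eq_nil_iff] at this
    exact hne w (List.mem_cons_self) (toList_inj' (by simp [this.1]))

lemma tsum_fact (a : Word n → ℝ) (α : Word n) :
    ∑' L : Fact n α, (L.1.map a).prod = bCoeff a α := by
  by_cases h : α = 1
  · subst h
    rw [bCoeff, if_pos rfl]
    have hu : ∀ L : Fact n (1 : Word n), L = ⟨[], by simp, by simp⟩ := by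
      intro L; exact Subtype.ext (fact_one_eq L)
    rw [tsum_eq_single (⟨[], by simp, by simp⟩ : Fact n 1)
      (fun L hL => absurd (hu L) hL)]
    simp
  · rw [bCoeff, if_neg h]

def takeW (k : ℕ) (α : Word n) : Word n := FreeMonoid.ofList ((FreeMonoid.toList α).take k)
def dropW (k : ℕ) (α : Word n) : Word n := FreeMonoid.ofList ((FreeMonoid.toList α).drop k)

lemma takeW_mul_dropW (k : ℕ) (α : Word n) : takeW k α * dropW k α = α := by
  apply toList_inj'; rw [FreeMonoid.toList_mul]; simp [takeW, dropW]

lemma takeW_prefix (β γ : Word n) : takeW (FreeMonoid.length β) (β * γ) = β := by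
  apply toList_inj'
  simp only [takeW, FreeMonoid.toList_ofList, FreeMonoid.toList_mul]
  exact List.take_left

lemma dropW_of_mul (β γ : Word n) : dropW (FreeMonoid.length β) (β * γ) = γ := by
  apply toList_inj'
  simp only [dropW, FreeMonoid.toList_ofList, FreeMonoid.toList_mul]
  exact List.drop_left

lemma wordLen_takeW {k : ℕ} {α : Word n} (h : k ≤ FreeMonoid.length α) :
    FreeMonoid.length (takeW k α) = k := by
  show ((FreeMonoid.toList α).take k).length = k
  rw [List.length_take]; exact min_eq_left h

lemma takeW_ne_one {k : ℕ} {α : Word n} (h : k < FreeMonoid.length α) :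
    takeW (k + 1) α ≠ 1 := by
  intro hcon
  have := wordLen_takeW (α := α) (k := k + 1) h
  rw [hcon] at this
  simp [FreeMonoid.length_one] at this

/-- prepend the prefix of length `k+1` to a factorization of the rest -/
def factCons (α : Word n) (p : Σ k : Fin (wordLen α), Fact n (dropW (k.1 + 1) α)) :
    Fact n α :=
  ⟨takeW (p.1.1 + 1) α :: p.2.1, by
      simp only [List.prod_cons, p.2.2.1]
      exact takeW_mul_dropW _ _, by
      intro w hw
      rcases List.mem_cons.1 hw with h | h
      · subst h; exact takeW_ne_one p.1.2
      · exact p.2.2.2 w h⟩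

lemma factCons_bij (α : Word n) (hα : α ≠ 1) : Function.Bijective (factCons α) := by
  constructor
  · rintro ⟨⟨k, hk⟩, L₁⟩ ⟨⟨j, hj⟩, L₂⟩ h
    have hlist : takeW (k + 1) α :: L₁.1 = takeW (j + 1) α :: L₂.1 :=
      congrArg Subtype.val h
    have hhead : takeW (k + 1) α = takeW (j + 1) α := (List.cons.injEq _ _ _ _ ▸ hlist).1
    have hkj : k = j := by
      have h1 := wordLen_takeW (α := α) (k := k + 1) hk
      have h2 := wordLen_takeW (α := α) (k := j + 1) hj
      rw [hhead] at h1
      omega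
    subst hkj
    have : L₁.1 = L₂.1 := (List.cons.injEq _ _ _ _ ▸ hlist).2
    simp only [Sigma.mk.inj_iff, heq_eq_eq]
    exact ⟨trivial, Subtype.ext this⟩
  · rintro ⟨L, hp, hne⟩
    cases L with
    | nil => exact absurd hp.symm (by simpa using hα)
    | cons w t =>
      have hwt : w * t.prod = α := by simpa using hp
      have hw1 : w ≠ 1 := hne w (List.mem_cons_self)
      have hwlen : 1 ≤ FreeMonoid.length w := by
        rcases Nat.eq_zero_or_pos (FreeMonoid.length w) with h | h
        · exact absurd (FreeMonoid.length_eq_zero.1 h) hw1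
        · exact h
      have hlen : FreeMonoid.length w ≤ wordLen α := by
        rw [wordLen, ← hwt, FreeMonoid.length_mul]; omega
      have hklt : FreeMonoid.length w - 1 < wordLen α := by omega
      have hk1 : FreeMonoid.length w - 1 + 1 = FreeMonoid.length w := by omega
      refine ⟨⟨⟨FreeMonoid.length w - 1, hklt⟩,
        ⟨t, ?_, fun v hv => hne v (List.mem_cons_of_mem _ hv)⟩⟩, ?_⟩
      · rw [hk1, ← hwt, dropW_of_mul]
      · apply Subtype.ext
        show takeW (FreeMonoid.length w - 1 + 1) α :: t = w :: t
        rw [hk1, ← hwt, takeW_prefix]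

lemma bCoeff_rec (a : Word n → ℝ) (α : Word n) (hα : α ≠ 1) :
    bCoeff a α = ∑ k ∈ Finset.range (wordLen α),
      a (takeW (k + 1) α) * bCoeff a (dropW (k + 1) α) := by
  letI : ∀ γ : Word n, Fintype (Fact n γ) := fun γ => Fintype.ofFinite _
  rw [← tsum_fact a α, tsum_fintype]
  have := Fintype.sum_bijective (factCons α) (factCons_bij α hα)
    (fun p => ((factCons α p).1.map a).prod) (fun L => (L.1.map a).prod) (fun p => rfl)
  rw [← this]
  rw [← Finset.univ_sigma_univ, Finset.sum_sigma]
  rw [Finset.sum_range fun k => a (takeW (k + 1) α) * bCoeff a (dropW (k + 1) α)]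
  apply Finset.sum_congr rfl
  intro k _
  rw [← tsum_fact a (dropW (k.1 + 1) α), tsum_fintype, Finset.mul_sum]
  apply Finset.sum_congr rfl
  intro L _
  simp [factCons]

lemma wordLen_dropW (k : ℕ) (α : Word n) : wordLen (dropW k α) = wordLen α - k := by
  show ((FreeMonoid.toList α).drop k).length = _
  rw [List.length_drop]; rfl

lemma wordLen_pos {α : Word n} (h : α ≠ 1) : 0 < wordLen α :=
  Nat.pos_of_ne_zero (fun h0 => h (FreeMonoid.length_eq_zero.1 h0))

lemma takeW_one_eq_of {α : Word n} (h : α ≠ 1) : ∃ i : Fin n, takeW 1 α = FreeMonoid.of i := by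
  have := wordLen_takeW (α := α) (k := 1) (wordLen_pos h)
  exact FreeMonoid.length_eq_one.1 this

lemma bCoeff_pos (a : Word n → ℝ) (ha0 : ∀ α, 0 ≤ a α)
    (hai : ∀ i : Fin n, 0 < a (FreeMonoid.of i)) (α : Word n) : 0 < bCoeff a α := by
  suffices H : ∀ m : ℕ, ∀ α : Word n, wordLen α ≤ m → 0 < bCoeff a α from
    H (wordLen α) α le_rfl
  intro m
  induction m with
  | zero =>
    intro α hm
    have : α = 1 := FreeMonoid.length_eq_zero.1 (Nat.le_zero.1 hm)
    subst this
    simp [bCoeff]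
  | succ m ih =>
    intro α hm
    by_cases hα : α = 1
    · subst hα; simp [bCoeff]
    · rw [bCoeff_rec a α hα]
      have hlen := wordLen_pos hα
      apply Finset.sum_pos'
      · intro k hk
        apply mul_nonneg (ha0 _)
        exact le_of_lt (ih _ (by rw [wordLen_dropW]; omega))
      · refine ⟨0, Finset.mem_range.2 hlen, ?_⟩
        obtain ⟨i, hi⟩ := takeW_one_eq_of hα
        have h1 : 0 < a (takeW (0 + 1) α) := by rw [zero_add, hi]; exact hai i
        exact mul_pos h1 (ih _ (by rw [wordLen_dropW]; omega))

lemma bCoeff_one (a : Word n → ℝ) : bCoeff a 1 = 1 := by simp [bCoeff]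

/-! ### The weighted shifts on basis vectors -/

lemma opWord_one {H : Type*} [NormedAddCommGroup H] [NormedSpace ℂ H]
    (T : Fin n → H →L[ℂ] H) : opWord T 1 = 1 := by
  simp [opWord, FreeMonoid.toList_one]

lemma opWord_of_mul {H : Type*} [NormedAddCommGroup H] [NormedSpace ℂ H]
    (T : Fin n → H →L[ℂ] H) (i : Fin n) (β : Word n) (x : H) :
    opWord T (FreeMonoid.of i * β) x = T i (opWord T β x) := by
  simp only [opWord, FreeMonoid.toList_mul, FreeMonoid.toList_of, List.map_append,
    List.prod_append, List.map_cons, List.prod_cons, List.map_nil, List.prod_nil, mul_one]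
  rfl

lemma opWord_apply_basis (a : Word n → ℝ) (hb : ∀ γ, 0 < bCoeff a γ)
    {W : Fin n → Fock n →L[ℂ] Fock n} (hW : IsWeightedShift a W) (β γ : Word n) :
    opWord W β (fockBasis γ) =
      (Real.sqrt (bCoeff a γ / bCoeff a (β * γ)) : ℂ) • fockBasis (β * γ) := by
  induction β using FreeMonoid.inductionOn' with
  | one =>
    rw [opWord_one, one_mul]
    simp [div_self (hb γ).ne']
  | of_mul i δ ih =>
    rw [opWord_of_mul, ih, ContinuousLinearMap.map_smul, hW i (δ * γ), smul_smul]
    rw [← mul_assoc (FreeMonoid.of i) δ γ]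
    congr 1
    rw [← Complex.ofReal_mul]
    congr 1
    rw [← Real.sqrt_mul (div_nonneg (hb γ).le (hb _).le)]
    congr 1
    field_simp
    rw [mul_comm (bCoeff a γ)]
    exact mul_div_mul_left _ _ (hb _).ne'

lemma coord_eq_inner (x : Fock n) (α : Word n) :
    (inner ℂ (fockBasis α) x : ℂ) = x α := by
  rw [fockBasis, lp.inner_single_left]
  simp [RCLike.inner_apply]

lemma fockBasis_apply (α δ : Word n) :
    (fockBasis α : ∀ _ : Word n, ℂ) δ = if δ = α then 1 else 0 := by
  rw [fockBasis, lp.single_apply]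
  split_ifs with h
  · subst h; simp
  · simp [h]

lemma inner_basis_basis (α δ : Word n) :
    (inner ℂ (fockBasis δ) (fockBasis α) : ℂ) = if δ = α then 1 else 0 := by
  rw [coord_eq_inner]
  exact fockBasis_apply α δ

lemma adjoint_opWord_basis_mul (a : Word n → ℝ) (hb : ∀ γ, 0 < bCoeff a γ)
    {W : Fin n → Fock n →L[ℂ] Fock n} (hW : IsWeightedShift a W) (β γ : Word n) :
    (opWord W β).adjoint (fockBasis (β * γ)) =
      (Real.sqrt (bCoeff a γ / bCoeff a (β * γ)) : ℂ) • fockBasis γ := by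
  apply lp.ext
  funext δ
  rw [← coord_eq_inner, ← coord_eq_inner]
  rw [ContinuousLinearMap.adjoint_inner_right]
  rw [opWord_apply_basis a hb hW β δ, inner_smul_left, inner_basis_basis]
  rw [inner_smul_right, inner_basis_basis]
  by_cases h : δ = γ
  · subst h
    simp [Complex.conj_ofReal]
  · have h2 : ¬ (β * δ = β * γ) := fun hc => h (mul_left_cancel hc)
    simp [h, h2]

lemma adjoint_opWord_basis_zero (a : Word n → ℝ) (hb : ∀ γ, 0 < bCoeff a γ)
    {W : Fin n → Fock n →L[ℂ] Fock n} (hW : IsWeightedShift a W) (β α : Word n)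
    (h : ¬ ∃ γ : Word n, β * γ = α) :
    (opWord W β).adjoint (fockBasis α) = 0 := by
  apply lp.ext
  funext δ
  rw [← coord_eq_inner]
  rw [ContinuousLinearMap.adjoint_inner_right]
  rw [opWord_apply_basis a hb hW β δ, inner_smul_left, inner_basis_basis]
  have : ¬ (β * δ = α) := fun hc => h ⟨δ, hc⟩
  simp [this]

open Classical in
/-- The diagonal weight of `a_β W_β W_β^*` at the basis vector `e_α`. -/
noncomputable def cW (a : Word n → ℝ) (β α : Word n) : ℝ :=
  if ∃ γ : Word n, β * γ = α then a β * (bCoeff a (dropW (wordLen β) α) / bCoeff a α) else 0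

lemma cW_nonneg (a : Word n → ℝ) (ha0 : ∀ α, 0 ≤ a α) (hb : ∀ γ, 0 < bCoeff a γ)
    (β α : Word n) : 0 ≤ cW a β α := by
  rw [cW]
  split_ifs with h
  · exact mul_nonneg (ha0 β) (div_nonneg (hb _).le (hb _).le)
  · exact le_rfl

lemma term_coord (a : Word n → ℝ) (hb : ∀ γ, 0 < bCoeff a γ)
    {W : Fin n → Fock n →L[ℂ] Fock n} (hW : IsWeightedShift a W) (β α : Word n) (x : Fock n) :
    ((a β : ℂ) • opWord W β ((opWord W β).adjoint x)) α = ((cW a β α : ℝ) : ℂ) * x α := by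
  have hcoord : ((a β : ℂ) • opWord W β ((opWord W β).adjoint x)) α
      = (inner ℂ (fockBasis α) ((a β : ℂ) • opWord W β ((opWord W β).adjoint x)) : ℂ) :=
    (coord_eq_inner _ α).symm
  rw [hcoord, inner_smul_right]
  have hadj : (inner ℂ (fockBasis α) (opWord W β ((opWord W β).adjoint x)) : ℂ)
      = inner ℂ ((opWord W β).adjoint (fockBasis α)) ((opWord W β).adjoint x) :=
    (ContinuousLinearMap.adjoint_inner_left _ _ _).symm
  rw [hadj]
  by_cases h : ∃ γ : Word n, β * γ = α
  · obtain ⟨γ, rfl⟩ := h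
    rw [adjoint_opWord_basis_mul a hb hW β γ, inner_smul_left]
    have h2 : (inner ℂ (fockBasis γ) ((opWord W β).adjoint x) : ℂ)
        = inner ℂ (opWord W β (fockBasis γ)) x :=
      ContinuousLinearMap.adjoint_inner_right _ _ _
    rw [h2, opWord_apply_basis a hb hW β γ, inner_smul_left, coord_eq_inner]
    rw [Complex.conj_ofReal, cW, if_pos ⟨γ, rfl⟩]
    have hd : dropW (wordLen β) (β * γ) = γ := dropW_of_mul β γ
    rw [hd]
    have hs : Real.sqrt (bCoeff a γ / bCoeff a (β * γ)) *
        Real.sqrt (bCoeff a γ / bCoeff a (β * γ)) = bCoeff a γ / bCoeff a (β * γ) :=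
      Real.mul_self_sqrt (div_nonneg (hb _).le (hb _).le)
    have h3 : ((Real.sqrt (bCoeff a γ / bCoeff a (β * γ)) : ℝ) : ℂ) *
        ((Real.sqrt (bCoeff a γ / bCoeff a (β * γ)) : ℝ) * x (β * γ))
        = ((bCoeff a γ / bCoeff a (β * γ) : ℝ) : ℂ) * x (β * γ) := by
      rw [← mul_assoc, ← Complex.ofReal_mul, hs]
    rw [h3]; push_cast; ring
  · rw [adjoint_opWord_basis_zero a hb hW β α h, cW, if_neg h]
    simp


/-! ### Prefix sums of the diagonal weights -/

/-- The finitely many nonempty prefixes of `α`, as a finset of `{γ // γ ≠ 1}`. -/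
noncomputable def PFin (α : Word n) : Finset {γ : Word n // γ ≠ 1} :=
  Finset.image (fun k : Fin (wordLen α) => ⟨takeW (k.1 + 1) α, takeW_ne_one k.2⟩) Finset.univ

lemma cW_eq_zero_of_not_mem (a : Word n → ℝ) (β : {γ : Word n // γ ≠ 1}) (α : Word n)
    (h : β ∉ PFin α) : cW a β.1 α = 0 := by
  rw [cW]
  split_ifs with hex
  · exfalso
    obtain ⟨γ, hγ⟩ := hex
    apply h
    have hlen1 : 0 < FreeMonoid.length β.1 := wordLen_pos β.2
    have hlen2 : FreeMonoid.length β.1 ≤ wordLen α := by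
      rw [wordLen, ← hγ, FreeMonoid.length_mul]; omega
    refine Finset.mem_image.2 ⟨⟨FreeMonoid.length β.1 - 1, by omega⟩, Finset.mem_univ _, ?_⟩
    apply Subtype.ext
    show takeW (FreeMonoid.length β.1 - 1 + 1) α = β.1
    rw [show FreeMonoid.length β.1 - 1 + 1 = FreeMonoid.length β.1 by omega, ← hγ, takeW_prefix]
  · rfl

/-- `dFull α` is `0` for the empty word and `1` otherwise. -/
noncomputable def dFull (α : Word n) : ℝ := if α = 1 then 0 else 1

lemma dFull_nonneg (α : Word n) : 0 ≤ dFull α := by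
  rw [dFull]; split_ifs <;> norm_num

lemma dFull_le_one (α : Word n) : dFull α ≤ 1 := by
  rw [dFull]; split_ifs <;> norm_num

lemma PFin_one : PFin (1 : Word n) = ∅ := by
  have h0 : wordLen (1 : Word n) = 0 := rfl
  apply Finset.eq_empty_of_forall_notMem
  intro β hβ
  obtain ⟨k, _, _⟩ := Finset.mem_image.1 (by rwa [PFin] at hβ)
  have := k.2
  omega

lemma sum_cW_P (a : Word n → ℝ) (hb : ∀ γ, 0 < bCoeff a γ) (α : Word n) (hα : α ≠ 1) :
    ∑ β ∈ PFin α, cW a β.1 α = 1 := by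
  rw [PFin, Finset.sum_image (by
    intro k _ j _ hkj
    have h1 := wordLen_takeW (α := α) (k := k.1 + 1) k.2
    have h2 := wordLen_takeW (α := α) (k := j.1 + 1) j.2
    have : takeW (k.1 + 1) α = takeW (j.1 + 1) α := congrArg Subtype.val hkj
    rw [this] at h1
    exact Fin.ext (by omega))]
  have hstep : ∀ k : Fin (wordLen α), cW a (takeW (k.1 + 1) α) α
      = a (takeW (k.1 + 1) α) * bCoeff a (dropW (k.1 + 1) α) / bCoeff a α := by
    intro k
    rw [cW, if_pos ⟨dropW (k.1 + 1) α, takeW_mul_dropW _ _⟩]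
    rw [show wordLen (takeW (k.1 + 1) α) = k.1 + 1 from wordLen_takeW k.2]
    ring
  rw [Finset.sum_congr rfl (fun k _ => hstep k)]
  rw [← Finset.sum_div]
  have hrec := bCoeff_rec a α hα
  rw [Finset.sum_range (fun k => a (takeW (k + 1) α) * bCoeff a (dropW (k + 1) α))] at hrec
  rw [← hrec, div_self (hb α).ne']

lemma sum_cW_F (a : Word n → ℝ) (F : Finset {γ : Word n // γ ≠ 1}) (α : Word n) :
    ∑ β ∈ F, cW a β.1 α = ∑ β ∈ F ∩ PFin α, cW a β.1 α :=
  (Finset.sum_subset Finset.inter_subset_left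
    (fun β hβF hβn => cW_eq_zero_of_not_mem a β α
      (fun hP => hβn (Finset.mem_inter.2 ⟨hβF, hP⟩)))).symm

lemma sum_cW_le (a : Word n → ℝ) (ha0 : ∀ α, 0 ≤ a α) (hb : ∀ γ, 0 < bCoeff a γ)
    (F : Finset {γ : Word n // γ ≠ 1}) (α : Word n) :
    ∑ β ∈ F, cW a β.1 α ≤ dFull α := by
  rw [sum_cW_F]
  by_cases hα : α = 1
  · subst hα
    rw [PFin_one, Finset.inter_empty, Finset.sum_empty, dFull, if_pos rfl]
  · rw [dFull, if_neg hα, ← sum_cW_P a hb α hα]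
    exact Finset.sum_le_sum_of_subset_of_nonneg Finset.inter_subset_right
      (fun β _ _ => cW_nonneg a ha0 hb β.1 α)

lemma sum_cW_eq (a : Word n → ℝ) (hb : ∀ γ, 0 < bCoeff a γ)
    {F : Finset {γ : Word n // γ ≠ 1}} {α : Word n} (h : PFin α ⊆ F) :
    ∑ β ∈ F, cW a β.1 α = dFull α := by
  rw [sum_cW_F, Finset.inter_eq_right.2 h]
  by_cases hα : α = 1
  · subst hα
    rw [PFin_one, Finset.sum_empty, dFull, if_pos rfl]
  · rw [dFull, if_neg hα, sum_cW_P a hb α hα]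

/-! ### Coordinates of partial sums -/

lemma psum_coord (a : Word n → ℝ) (hb : ∀ γ, 0 < bCoeff a γ)
    {W : Fin n → Fock n →L[ℂ] Fock n} (hW : IsWeightedShift a W)
    (F : Finset {γ : Word n // γ ≠ 1}) (x : Fock n) (α : Word n) :
    ((∑ β ∈ F, (a β.1 : ℂ) • opWord W β.1 ((opWord W β.1).adjoint x) : Fock n)) α
      = ((∑ β ∈ F, cW a β.1 α : ℝ) : ℂ) * x α := by
  rw [lp.coeFn_sum, Finset.sum_apply]
  push_cast
  rw [Finset.sum_mul]
  exact Finset.sum_congr rfl fun β _ => term_coord a hb hW β.1 α x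

lemma target_coord (x : Fock n) (α : Word n) :
    ((x - (inner ℂ (fockBasis (1 : Word n)) x : ℂ) • fockBasis (1 : Word n) : Fock n)) α
      = ((dFull α : ℝ) : ℂ) * x α := by
  rw [lp.coeFn_sub, Pi.sub_apply, lp.coeFn_smul, Pi.smul_apply, coord_eq_inner, fockBasis_apply,
    dFull]
  by_cases h : α = 1
  · subst h; simp
  · simp [h]

lemma norm_sq_fock (z : Fock n) : ‖z‖ ^ 2 = ∑' α : Word n, ‖z α‖ ^ 2 := by
  have h2 : ∀ r : ℝ, r ^ ((2 : ℝ≥0∞)).toReal = r ^ 2 := fun r => by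
    rw [show ((2 : ℝ≥0∞)).toReal = ((2 : ℕ) : ℝ) by norm_num, Real.rpow_natCast]
  have h := lp.norm_rpow_eq_tsum (p := 2) (by norm_num) z
  simp only [h2] at h
  exact h

lemma summable_norm_sq (z : Fock n) : Summable fun α : Word n => ‖z α‖ ^ 2 := by
  have h2 : ∀ r : ℝ, r ^ ((2 : ℝ≥0∞)).toReal = r ^ 2 := fun r => by
    rw [show ((2 : ℝ≥0∞)).toReal = ((2 : ℕ) : ℝ) by norm_num, Real.rpow_natCast]
  have h := (lp.memℓp z).summable (p := 2) (by norm_num)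
  simpa only [h2] using h

set_option maxHeartbeats 1000000 in
/-- `I − Σ_{|β|≥1} a_β W_β W_β* = P_ℂ`, the rank-one projection onto the
vacuum vector (the series converging in the strong operator topology); in particular
`Σ_{|α|≥1} a_α W_α W_α* ≤ I`. -/
theorem defect_eq_vacuum_projection {n : ℕ} (a : Word n → ℝ) (hreg : PosRegular a)
    (W : Fin n → Fock n →L[ℂ] Fock n) (hW : IsWeightedShift a W) :
    (∀ x : Fock n,
      HasSum (fun β : {γ : Word n // γ ≠ 1} =>
          (a β.1 : ℂ) • opWord W β.1 ((opWord W β.1).adjoint x))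
        (x - (inner ℂ (fockBasis (1 : Word n)) x : ℂ) • fockBasis (1 : Word n))) ∧
    ∀ x : Fock n,
      (∑' β : {γ : Word n // γ ≠ 1}, a β.1 * ‖(opWord W β.1).adjoint x‖ ^ 2) ≤ ‖x‖ ^ 2 := by
  obtain ⟨ha1, ha0, hai, hgrow⟩ := hreg
  have hb : ∀ γ : Word n, 0 < bCoeff a γ := bCoeff_pos a ha0 hai
  have main : ∀ x : Fock n,
      HasSum (fun β : {γ : Word n // γ ≠ 1} =>
          (a β.1 : ℂ) • opWord W β.1 ((opWord W β.1).adjoint x))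
        (x - (inner ℂ (fockBasis (1 : Word n)) x : ℂ) • fockBasis (1 : Word n)) := by
    intro x
    set y : Fock n := x - (inner ℂ (fockBasis (1 : Word n)) x : ℂ) • fockBasis (1 : Word n)
      with hy
    rw [HasSum, SummationFilter.unconditional_filter, Metric.tendsto_atTop]
    intro ε hε
    have hg : Summable (fun α : Word n => ‖x α‖ ^ 2) := summable_norm_sq x
    have hδ : (0 : ℝ) < ε ^ 2 / 2 := by positivity
    obtain ⟨A, hA⟩ : ∃ A : Finset (Word n),
        (∑' α : Word n, ‖x α‖ ^ 2) - ε ^ 2 / 2 < ∑ α ∈ A, ‖x α‖ ^ 2 := by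
      have ht := hg.hasSum
      rw [HasSum] at ht
      exact (ht.eventually (eventually_gt_nhds
        (show (∑' α : Word n, ‖x α‖ ^ 2) - ε ^ 2 / 2 < ∑' α : Word n, ‖x α‖ ^ 2
          by linarith))).exists
    refine ⟨A.biUnion (fun α => PFin α), fun F hF => ?_⟩
    rw [dist_eq_norm]
    set z : Fock n :=
      (∑ β ∈ F, (a β.1 : ℂ) • opWord W β.1 ((opWord W β.1).adjoint x)) - y with hz
    have hzc : ∀ α : Word n, (z : ∀ _ : Word n, ℂ) α
        = (((∑ β ∈ F, cW a β.1 α) - dFull α : ℝ) : ℂ) * x α := by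
      intro α
      rw [hz, lp.coeFn_sub, Pi.sub_apply, psum_coord a hb hW F x α, hy, target_coord]
      push_cast
      ring
    have hterm : ∀ α : Word n,
        ‖(z : ∀ _ : Word n, ℂ) α‖ ^ 2 ≤ (if α ∈ A then 0 else ‖x α‖ ^ 2) := by
      intro α
      rw [hzc α, norm_mul, Complex.norm_real]
      by_cases hA' : α ∈ A
      · have hsub : PFin α ⊆ F := (Finset.subset_biUnion_of_mem _ hA').trans hF
        rw [sum_cW_eq a hb hsub]
        simp [hA']
      · simp only [if_neg hA']
        have h1 : (0 : ℝ) ≤ ∑ β ∈ F, cW a β.1 α :=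
          Finset.sum_nonneg fun β _ => cW_nonneg a ha0 hb β.1 α
        have h2 := sum_cW_le a ha0 hb F α
        have h3 := dFull_le_one α
        have h4 := dFull_nonneg α
        have habs : |(∑ β ∈ F, cW a β.1 α) - dFull α| ≤ 1 := by
          rw [abs_le]; constructor <;> linarith
        have habs2 : |(∑ β ∈ F, cW a β.1 α) - dFull α| ^ 2 ≤ 1 := by
          nlinarith [abs_nonneg ((∑ β ∈ F, cW a β.1 α) - dFull α)]
        calc (|(∑ β ∈ F, cW a β.1 α) - dFull α| * ‖x α‖) ^ 2
            = |(∑ β ∈ F, cW a β.1 α) - dFull α| ^ 2 * ‖x α‖ ^ 2 := mul_pow _ _ _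
          _ ≤ 1 * ‖x α‖ ^ 2 := by
              have := sq_nonneg ‖x α‖
              nlinarith
          _ = ‖x α‖ ^ 2 := one_mul _
    have hs_summ : Summable (fun α : Word n => if α ∈ A then (0 : ℝ) else ‖x α‖ ^ 2) := by
      apply Summable.of_nonneg_of_le (fun α => by split_ifs <;> positivity)
        (fun α => by split_ifs <;> simp [sq_nonneg]) hg
    have hle : ‖z‖ ^ 2 ≤ ∑' α : Word n, (if α ∈ A then (0 : ℝ) else ‖x α‖ ^ 2) := by
      rw [norm_sq_fock z]
      exact Summable.tsum_le_tsum hterm (summable_norm_sq z) hs_summ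
    have hfin : Summable (fun α : Word n => if α ∈ A then ‖x α‖ ^ 2 else (0 : ℝ)) :=
      summable_of_ne_finset_zero (s := A) (fun α hα => if_neg hα)
    have h4 : (∑' α : Word n, ‖x α‖ ^ 2)
        = (∑' α : Word n, (if α ∈ A then (0 : ℝ) else ‖x α‖ ^ 2))
          + ∑' α : Word n, (if α ∈ A then ‖x α‖ ^ 2 else (0 : ℝ)) := by
      rw [← Summable.tsum_add hs_summ hfin]
      exact tsum_congr fun α => by split_ifs <;> simp
    have h5 : (∑' α : Word n, (if α ∈ A then ‖x α‖ ^ 2 else (0 : ℝ)))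
        = ∑ α ∈ A, ‖x α‖ ^ 2 := by
      rw [tsum_eq_sum (s := A) (fun α hα => if_neg hα)]
      exact Finset.sum_congr rfl fun α hα => if_pos hα
    have hz2 : ‖z‖ ^ 2 < ε ^ 2 := by
      rw [h5] at h4
      have : (∑' α : Word n, (if α ∈ A then (0 : ℝ) else ‖x α‖ ^ 2)) < ε ^ 2 / 2 := by
        linarith
      linarith
    exact lt_of_pow_lt_pow_left₀ 2 hε.le hz2
  refine ⟨main, fun x => ?_⟩
  have h1 := main x
  have h2 := (innerSL ℂ x).hasSum h1
  have h3 : (fun β : {γ : Word n // γ ≠ 1} =>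
      (innerSL ℂ x) ((a β.1 : ℂ) • opWord W β.1 ((opWord W β.1).adjoint x)))
      = fun β : {γ : Word n // γ ≠ 1} =>
        ((a β.1 * ‖(opWord W β.1).adjoint x‖ ^ 2 : ℝ) : ℂ) := by
    funext β
    rw [innerSL_apply_apply, inner_smul_right]
    have hadj : (inner ℂ x (opWord W β.1 ((opWord W β.1).adjoint x)) : ℂ)
        = inner ℂ ((opWord W β.1).adjoint x) ((opWord W β.1).adjoint x) :=
      (ContinuousLinearMap.adjoint_inner_left _ _ _).symm
    rw [hadj, inner_self_eq_norm_sq_to_K]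
    push_cast
    exact rfl
  rw [h3] at h2
  have h6 := Complex.reCLM.hasSum h2
  simp only [Complex.reCLM_apply, Complex.ofReal_re] at h6
  rw [innerSL_apply_apply] at h6
  rw [h6.tsum_eq]
  have hc : (inner ℂ x (x - (inner ℂ (fockBasis (1 : Word n)) x : ℂ) • fockBasis (1 : Word n)) : ℂ)
      = ((‖x‖ : ℂ)) ^ 2 - (Complex.normSq (inner ℂ (fockBasis (1 : Word n)) x : ℂ) : ℂ) := by
    rw [inner_sub_right, inner_smul_right, inner_self_eq_norm_sq_to_K]
    congr 1
    rw [← inner_conj_symm x (fockBasis (1 : Word n))]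
    rw [mul_comm, ← Complex.normSq_eq_conj_mul_self]
  rw [hc]
  have : ((‖x‖ : ℂ) ^ 2 - (Complex.normSq (inner ℂ (fockBasis (1 : Word n)) x : ℂ) : ℂ)).re
      = ‖x‖ ^ 2 - Complex.normSq (inner ℂ (fockBasis (1 : Word n)) x : ℂ) := by
    simp [Complex.sub_re]
    norm_cast
  rw [this]
  have := Complex.normSq_nonneg (inner ℂ (fockBasis (1 : Word n)) x : ℂ)
  linarith

end NCDomain
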